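/- Define the harmonic sawtooth map w(x) = ⌊1/x⌋ (x⌊1/x⌋ + x - 1) for x ∈ (0,1). Then for all real s > 1, ζ(s) = s(s+1)/(s-1) · ∫_0^1 w(x) x^{s-1} dx. -/

import Mathlib

open scoped BigOperators

open MeasureTheory Set

namespace ZetaSawtoothAux

lemma floor_on_piece (n : ℕ) {x : ℝ} (hx : x ∈ Set.Ioc (1/((n:ℝ)+2)) (1/((n:ℝ)+1))) :
    ⌊1 / x⌋ = (n : ℤ) + 1 := by
  obtain ⟨h1, h2⟩ := hx
  have hn2 : (0:ℝ) < (n:ℝ) + 2 := by positivity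
  have hn1 : (0:ℝ) < (n:ℝ) + 1 := by positivity
  have hx0 : 0 < x := lt_trans (by positivity) h1
  rw [Int.floor_eq_iff]
  constructor
  · push_cast
    rw [le_div_iff₀ hx0]
    rw [le_div_iff₀ hn1] at h2
    nlinarith
  · push_cast
    rw [div_lt_iff₀ hx0]
    rw [div_lt_iff₀ hn2] at h1
    nlinarith

lemma union_pieces : (⋃ n : ℕ, Set.Ioc (1/((n:ℝ)+2)) (1/((n:ℝ)+1))) = Set.Ioc (0:ℝ) 1 := by
  ext x
  simp only [Set.mem_iUnion, Set.mem_Ioc]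
  constructor
  · rintro ⟨n, h1, h2⟩
    have hn1 : (0:ℝ) < (n:ℝ) + 1 := by positivity
    refine ⟨lt_trans (by positivity) h1, h2.trans ?_⟩
    rw [div_le_one hn1]; linarith [Nat.cast_nonneg (α := ℝ) n]
  · rintro ⟨h1, h2⟩
    have h1x : 1 ≤ 1 / x := by rw [le_div_iff₀ h1]; linarith
    have hm1 : 1 ≤ ⌊1/x⌋ := Int.le_floor.mpr (by exact_mod_cast h1x)
    have hcast : ((( ⌊1/x⌋ - 1).toNat : ℤ) : ℝ) = (⌊1/x⌋ : ℝ) - 1 := by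
      rw [Int.toNat_of_nonneg (by omega)]; push_cast; ring
    push_cast at hcast
    refine ⟨(⌊1/x⌋ - 1).toNat, ?_, ?_⟩
    · rw [hcast]
      have hlt := Int.lt_floor_add_one (1/x)
      rw [div_lt_iff₀ h1] at hlt
      have hfl1 : (1:ℝ) ≤ (⌊1/x⌋:ℝ) := by exact_mod_cast hm1
      have hd : (0:ℝ) < (⌊1/x⌋:ℝ) - 1 + 2 := by linarith
      rw [div_lt_iff₀ hd]
      nlinarith
    · rw [hcast]
      have hfl : ((⌊1/x⌋:ℝ)) ≤ 1/x := Int.floor_le _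
      have hflpos : (0:ℝ) < (⌊1/x⌋:ℝ) := by exact_mod_cast lt_of_lt_of_le zero_lt_one hm1
      have : (⌊1/x⌋:ℝ) - 1 + 1 = (⌊1/x⌋:ℝ) := by ring
      rw [this, le_div_iff₀ hflpos]
      rw [le_div_iff₀ h1] at hfl
      nlinarith

lemma piece_integral (s : ℝ) (hs : 1 < s) (n : ℕ) :
    (∫ x in Set.Ioc (1/((n:ℝ)+2)) (1/((n:ℝ)+1)),
      (⌊1 / x⌋ : ℝ) * (x * (⌊1 / x⌋ : ℝ) + x - 1) * x ^ (s - 1))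
    = ((s - ((n:ℝ)+1)) * ((n:ℝ)+1) ^ (-s) + ((n:ℝ)+1) * ((n:ℝ)+2) ^ (-s)) / (s*(s+1)) := by
  have hK : (0:ℝ) < (n:ℝ)+1 := by positivity
  have hL : (0:ℝ) < (n:ℝ)+2 := by positivity
  set K : ℝ := (n:ℝ)+1 with hKdef
  set L : ℝ := (n:ℝ)+2 with hLdef
  have hKL : K ≤ L := by rw [hKdef, hLdef]; linarith
  have hab : 1/L ≤ 1/K := one_div_le_one_div_of_le hK hKL
  have ha0 : (0:ℝ) < 1/L := by positivity
  have hcongr : ∫ x in Set.Ioc (1/L) (1/K),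
      (⌊1 / x⌋ : ℝ) * (x * (⌊1 / x⌋ : ℝ) + x - 1) * x ^ (s - 1)
      = ∫ x in Set.Ioc (1/L) (1/K), (K*L* x ^ s - K * x ^ (s-1)) := by
    apply setIntegral_congr_fun measurableSet_Ioc
    intro x hx
    have hx0 : 0 < x := lt_trans ha0 hx.1
    have hfl : (⌊1/x⌋ : ℝ) = K := by
      rw [floor_on_piece n hx]; push_cast; rfl
    have hxs : x ^ s = x ^ (s-1) * x := by
      rw [← Real.rpow_add_one hx0.ne' (s-1)]; ring_nf
    simp only [hfl, hxs, hLdef, hKdef]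
    ring
  rw [hcongr, ← intervalIntegral.integral_of_le hab]
  have hi1 : IntervalIntegrable (fun x : ℝ => K*L* x ^ s) volume (1/L) (1/K) :=
    (intervalIntegral.intervalIntegrable_rpow' (by linarith)).const_mul _
  have hi2 : IntervalIntegrable (fun x : ℝ => K * x ^ (s-1)) volume (1/L) (1/K) :=
    (intervalIntegral.intervalIntegrable_rpow' (by linarith)).const_mul _
  rw [intervalIntegral.integral_sub hi1 hi2, intervalIntegral.integral_const_mul,
    intervalIntegral.integral_const_mul, integral_rpow (Or.inl (by linarith)),
    integral_rpow (Or.inl (by linarith))]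
  have hs1 : s - 1 + 1 = s := by ring
  rw [hs1]
  have hid : ∀ y r : ℝ, 0 < y → (1/y) ^ r = y ^ (-r) := by
    intro y r hy
    rw [one_div, Real.inv_rpow hy.le, Real.rpow_neg hy.le]
  have hid2 : ∀ y : ℝ, 0 < y → (1/y) ^ (s+1) = y ^ (-s) * y⁻¹ := by
    intro y hy
    rw [hid y (s+1) hy, neg_add, Real.rpow_add hy, Real.rpow_neg_one]
  rw [hid2 K hK, hid2 L hL, hid K s hK, hid L s hL]
  have hs0 : s ≠ 0 := by linarith
  have hs1' : s + 1 ≠ 0 := by linarith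
  have hLK : L = K + 1 := by rw [hKdef, hLdef]; ring
  rw [hLK]
  field_simp
  ring

lemma summable_u (s : ℝ) (hs : 1 < s) : Summable (fun n : ℕ => ((n:ℝ)+1) ^ (-s)) := by
  have h : Summable (fun n : ℕ => ((n:ℝ)) ^ (-s)) := Real.summable_nat_rpow.mpr (by linarith)
  have := (summable_nat_add_iff 1).mpr h
  refine this.congr fun n => ?_
  push_cast
  rfl

lemma telescope (s : ℝ) (hs : 1 < s) :
    HasSum (fun n : ℕ => ((n:ℝ)+1) ^ (-(s-1)) - ((n:ℝ)+2) ^ (-(s-1))) 1 := by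
  set a : ℕ → ℝ := fun n => ((n:ℝ)+1) ^ (-(s-1)) with ha
  have key : ∀ n : ℕ, ((n:ℝ)+1) ^ (-(s-1)) - ((n:ℝ)+2) ^ (-(s-1)) = a n - a (n+1) := by
    intro n; simp only [ha]; push_cast; ring_nf
  have hnonneg : ∀ n : ℕ, 0 ≤ a n - a (n+1) := by
    intro n
    have : a (n+1) ≤ a n := by
      apply Real.rpow_le_rpow_of_nonpos (by positivity) (by push_cast; linarith) (by linarith)
    linarith
  have h0 : a 0 = 1 := by simp [ha]
  rw [funext key, hasSum_iff_tendsto_nat_of_nonneg hnonneg]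
  have hsum : ∀ n : ℕ, ∑ i ∈ Finset.range n, (a i - a (i+1)) = a 0 - a n :=
    fun n => Finset.sum_range_sub' a n
  simp only [hsum, h0]
  have hlim : Filter.Tendsto a Filter.atTop (nhds 0) := by
    have h1 : Filter.Tendsto (fun n : ℕ => (n:ℝ)+1) Filter.atTop Filter.atTop :=
      Filter.tendsto_atTop_add_const_right _ 1 tendsto_natCast_atTop_atTop
    exact (tendsto_rpow_neg_atTop (by linarith)).comp h1
  simpa using Filter.Tendsto.sub tendsto_const_nhds hlim

lemma sum_pieces (s : ℝ) (hs : 1 < s) :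
    HasSum (fun n : ℕ =>
        ((s - ((n:ℝ)+1)) * ((n:ℝ)+1) ^ (-s) + ((n:ℝ)+1) * ((n:ℝ)+2) ^ (-s)) / (s*(s+1)))
      ((s-1) * (∑' n : ℕ, ((n:ℝ)+1)^(-s)) / (s*(s+1))) := by
  set u : ℕ → ℝ := fun n => ((n:ℝ)+1) ^ (-s) with hu
  set A : ℝ := ∑' n : ℕ, u n with hA
  have hU : HasSum u A := (summable_u s hs).hasSum
  have hu0 : u 0 = 1 := by simp [hu]
  have hshift : HasSum (fun n : ℕ => u (n+1)) (A - 1) := by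
    refine (hasSum_nat_add_iff 1).mpr ?_
    simpa [hu0] using hU
  have htel := telescope s hs
  have comb := (((hU.mul_left s).sub htel).sub hshift).div_const (s*(s+1))
  have hval : (s * A - 1 - (A - 1)) / (s*(s+1)) = (s-1) * A / (s*(s+1)) := by ring_nf
  rw [hval] at comb
  refine HasSum.congr_fun comb fun n => ?_
  have hnn : ∀ y : ℝ, 0 < y → y ^ (-(s-1)) = y ^ (-s) * y := by
    intro y hy
    rw [show -(s-1) = -s + 1 by ring, Real.rpow_add hy, Real.rpow_one]
  simp only [hu]
  push_cast
  rw [hnn ((n:ℝ)+1) (by positivity), hnn ((n:ℝ)+2) (by positivity)]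
  ring_nf

lemma integrable_f (s : ℝ) (hs : 1 < s) :
    IntegrableOn (fun x : ℝ => (⌊1 / x⌋ : ℝ) * (x * (⌊1 / x⌋ : ℝ) + x - 1) * x ^ (s - 1))
      (Set.Ioc 0 1) volume := by
  have hmeas : Measurable fun x : ℝ =>
      (⌊1 / x⌋ : ℝ) * (x * (⌊1 / x⌋ : ℝ) + x - 1) * x ^ (s - 1) := by
    have h0 : Measurable fun x : ℝ => ⌊1 / x⌋ := (measurable_const.div measurable_id).floor
    have h1 : Measurable fun x : ℝ => (⌊1 / x⌋ : ℝ) := measurable_from_top.comp h0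
    fun_prop
  apply Measure.integrableOn_of_bounded (M := 1) measure_Ioc_lt_top.ne hmeas.aestronglyMeasurable
  filter_upwards [ae_restrict_mem measurableSet_Ioc] with x hx
  obtain ⟨hx0, hx1⟩ := hx
  have h1x : 1 ≤ 1 / x := by rw [le_div_iff₀ hx0]; linarith
  have hm1 : (1:ℝ) ≤ (⌊1/x⌋:ℝ) := by exact_mod_cast Int.le_floor.mpr (by exact_mod_cast h1x)
  have hfl : ((⌊1/x⌋:ℝ)) ≤ 1/x := Int.floor_le _
  have hfl2 : 1/x < (⌊1/x⌋:ℝ) + 1 := Int.lt_floor_add_one _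
  rw [le_div_iff₀ hx0] at hfl
  rw [div_lt_iff₀ hx0] at hfl2
  set m : ℝ := (⌊1/x⌋:ℝ)
  have hw0 : 0 ≤ m * (x * m + x - 1) := by nlinarith
  have hw1 : m * (x * m + x - 1) ≤ 1 := by nlinarith
  have hr0 : 0 ≤ x ^ (s-1) := Real.rpow_nonneg hx0.le _
  have hr1 : x ^ (s-1) ≤ 1 := Real.rpow_le_one hx0.le hx1 (by linarith)
  rw [Real.norm_eq_abs, abs_of_nonneg (mul_nonneg hw0 hr0)]
  nlinarith

lemma pieces_disjoint :
    Pairwise (Function.onFun Disjoint fun n : ℕ => Set.Ioc (1/((n:ℝ)+2)) (1/((n:ℝ)+1))) := by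
  have key : ∀ i j : ℕ, i < j →
      Disjoint (Set.Ioc (1/((i:ℝ)+2)) (1/((i:ℝ)+1))) (Set.Ioc (1/((j:ℝ)+2)) (1/((j:ℝ)+1))) := by
    intro i j hij
    rw [Set.Ioc_disjoint_Ioc]
    refine le_trans (min_le_right _ _) (le_trans ?_ (le_max_left _ _))
    apply one_div_le_one_div_of_le (by positivity)
    have : (i:ℝ) + 1 ≤ (j:ℝ) := by exact_mod_cast hij
    linarith
  intro i j hij
  rcases hij.lt_or_gt with h | h
  · exact key i j h
  · exact (key j i h).symm

end ZetaSawtoothAux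

open ZetaSawtoothAux in
/-- The harmonic sawtooth map `w(x) = ⌊1/x⌋(x⌊1/x⌋ + x - 1)` satisfies
`ζ(s) = s(s+1)/(s-1) ∫_0^1 w(x) x^{s-1} dx` for real `s > 1`. -/
theorem zeta_eq_harmonic_sawtooth_mellin (s : ℝ) (hs : 1 < s) :
    (∑' n : ℕ, ((n : ℝ) + 1) ^ (-s)) =
      s * (s + 1) / (s - 1) *
        ∫ x in Set.Ioo (0 : ℝ) 1,
          (⌊1 / x⌋ : ℝ) * (x * (⌊1 / x⌋ : ℝ) + x - 1) * x ^ (s - 1) := by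
  have hint : (∫ x in Set.Ioo (0 : ℝ) 1,
      (⌊1 / x⌋ : ℝ) * (x * (⌊1 / x⌋ : ℝ) + x - 1) * x ^ (s - 1))
      = (s-1) * (∑' n : ℕ, ((n:ℝ)+1)^(-s)) / (s*(s+1)) := by
    rw [← integral_Ioc_eq_integral_Ioo, ← union_pieces,
      integral_iUnion (fun n => measurableSet_Ioc) pieces_disjoint
        (union_pieces ▸ integrable_f s hs)]
    rw [tsum_congr (piece_integral s hs)]
    exact (sum_pieces s hs).tsum_eq
  rw [hint]
  have hs0 : s ≠ 0 := by linarith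
  have hs1 : s + 1 ≠ 0 := by linarith
  have hsm1 : s - 1 ≠ 0 := by intro h; linarith [sub_eq_zero.mp h]
  field_simp
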